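/- arXiv:1102.2835 — 6 statements merged into one kernel-verified Lean document; each statement's English description precedes it below -/
import Mathlib

section
/- For a closed (n+1)-form σ on a manifold Z, the gauge transformation Φ_σ(Γ, Σ) = (Γ, Σ + i_Γ σ) on sections of ⋀^r(TZ) ⊕ ⋀^{n+1-r}(T*Z) is an automorphism of the multi-Courant bracket: Φ_σ([[(Γ,Σ),(Γ',Σ')]]) = [[Φ_σ(Γ,Σ), Φ_σ(Γ',Σ')]]. -/
noncomputable section

/-- An abstract model of the calculus of multivector fields and differential
forms on a smooth manifold `Z`:  `A` plays the role of the ring of smooth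
functions `C^∞(Z)`, `X` the space of (inhomogeneous) multivector fields, and
`F` the space of (inhomogeneous) differential forms.  The submodules `MV k`
and `Fm k` are the multivector fields and forms of pure degree `k`; `wedge`
is the exterior product of multivector fields, `sch` the Schouten–Nijenhuis
bracket, `iota` the contraction (interior product) of a multivector field
with a form (for decomposable `Γ = X₁ ∧ ⋯ ∧ X_k`,
`iota Γ α = i_{X_k} ⋯ i_{X_1} α`), and `d` the exterior derivative. -/
structure MultiCalc (A X F : Type) [CommRing A] [Algebra ℝ A]
    [AddCommGroup X] [AddCommGroup F] [Module ℝ X] [Module ℝ F]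
    [Module A X] [Module A F] [IsScalarTower ℝ A X] [IsScalarTower ℝ A F] where
  MV : ℕ → Submodule A X
  Fm : ℕ → Submodule A F
  wedge : X → X → X
  sch : X → X → X
  iota : X → F → F
  d : F → F
  wedge_add_left : ∀ a b c, wedge (a + b) c = wedge a c + wedge b c
  wedge_add_right : ∀ a b c, wedge a (b + c) = wedge a b + wedge a c
  wedge_smul_left : ∀ (f : A) a b, wedge (f • a) b = f • wedge a b
  wedge_smul_right : ∀ (f : A) a b, wedge a (f • b) = f • wedge a b
  iota_add_left : ∀ a b α, iota (a + b) α = iota a α + iota b α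
  iota_add_right : ∀ a α β, iota a (α + β) = iota a α + iota a β
  iota_smul_left : ∀ (f : A) a α, iota (f • a) α = f • iota a α
  iota_smul_right : ∀ (f : A) a α, iota a (f • α) = f • iota a α
  sch_add_left : ∀ a b c, sch (a + b) c = sch a c + sch b c
  sch_add_right : ∀ a b c, sch a (b + c) = sch a b + sch a c
  sch_smul_left : ∀ (c : ℝ) a b, sch (c • a) b = c • sch a b
  sch_smul_right : ∀ (c : ℝ) a b, sch a (c • b) = c • sch a b
  d_add : ∀ α β, d (α + β) = d α + d β
  d_smul : ∀ (c : ℝ) α, d (c • α) = c • d α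
  d_d : ∀ α, d (d α) = 0
  wedge_mem : ∀ {r s : ℕ} {a b}, a ∈ MV r → b ∈ MV s → wedge a b ∈ MV (r + s)
  sch_mem : ∀ {r s : ℕ} {a b}, a ∈ MV r → b ∈ MV s → sch a b ∈ MV (r + s - 1)
  iota_mem : ∀ {r k : ℕ} {a α}, a ∈ MV r → α ∈ Fm k → iota a α ∈ Fm (k - r)
  iota_zero_of_lt : ∀ {r k : ℕ} {a α}, a ∈ MV r → α ∈ Fm k → k < r → iota a α = 0
  d_mem : ∀ {k : ℕ} {α}, α ∈ Fm k → d α ∈ Fm (k + 1)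
  /-- `i_{Γ ∧ Γ'} = i_{Γ'} ∘ i_Γ` -/
  iota_wedge : ∀ {r s : ℕ} {a b}, a ∈ MV r → b ∈ MV s →
    ∀ α, iota (wedge a b) α = iota b (iota a α)
  /-- graded commutativity of contractions -/
  iota_comm : ∀ {r s : ℕ} {a b}, a ∈ MV r → b ∈ MV s →
    ∀ α, iota a (iota b α) = ((-1:ℝ)^(r*s)) • iota b (iota a α)
  /-- the Koszul identity `i_{[Γ,Γ']} α = (-1)^{(k-1)l} £_Γ i_{Γ'} α − i_{Γ'} £_Γ α`,
  written out using `£_Γ α = d i_Γ α − (-1)^k i_Γ dα`. -/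
  koszul : ∀ {k l : ℕ} {a b}, a ∈ MV k → b ∈ MV l → ∀ α,
    iota (sch a b) α =
      ((-1:ℝ)^((k-1)*l)) •
        (d (iota a (iota b α)) - ((-1:ℝ)^k) • iota a (d (iota b α)))
      - iota b (d (iota a α) - ((-1:ℝ)^k) • iota a (d α))
  /-- graded anticommutativity of the Schouten–Nijenhuis bracket -/
  sch_comm : ∀ {k l : ℕ} {a b}, a ∈ MV k → b ∈ MV l →
    sch a b = -(((-1:ℝ)^((k-1)*(l-1))) • sch b a)
  /-- graded Leibniz rule for the Schouten–Nijenhuis bracket -/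
  sch_leibniz : ∀ {k l m : ℕ} {a b c}, a ∈ MV k → b ∈ MV l → c ∈ MV m →
    sch a (wedge b c) = wedge (sch a b) c + ((-1:ℝ)^((k-1)*l)) • wedge b (sch a c)
  /-- graded Jacobi identity for the Schouten–Nijenhuis bracket -/
  sch_jacobi : ∀ {k l m : ℕ} {a b c}, a ∈ MV k → b ∈ MV l → c ∈ MV m →
    ((-1:ℝ)^((k-1)*(m-1))) • sch a (sch b c)
      + ((-1:ℝ)^((l-1)*(k-1))) • sch b (sch c a)
      + ((-1:ℝ)^((m-1)*(l-1))) • sch c (sch a b) = 0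
  /-- contraction is a nondegenerate pairing of multivector fields with forms -/
  iota_nondeg : ∀ {k r : ℕ} {α}, α ∈ Fm k → 1 ≤ r → r ≤ k →
    (∀ a ∈ MV r, iota a α = 0) → α = 0

namespace MultiCalc

variable {A X F : Type} [CommRing A] [Algebra ℝ A]
  [AddCommGroup X] [AddCommGroup F] [Module ℝ X] [Module ℝ F]
  [Module A X] [Module A F] [IsScalarTower ℝ A X] [IsScalarTower ℝ A F]
variable (C : MultiCalc A X F)

/-- generalized Lie derivative along a multivector field of degree `k`:
`£_Γ α = d i_Γ α − (-1)^k i_Γ dα` -/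
def lie (k : ℕ) (a : X) (α : F) : F :=
  C.d (C.iota a α) - ((-1:ℝ)^k) • C.iota a (C.d α)

/-- graded symmetric pairing `⟨⟨·,·⟩⟩₊` on `L_r × L_s` -/
def pairPlus (r s : ℕ) (p q : X × F) : F :=
  (1/2 : ℝ) • (C.iota q.1 p.2 + ((-1:ℝ)^(r*s)) • C.iota p.1 q.2)

/-- graded antisymmetric pairing `⟨⟨·,·⟩⟩₋` on `L_r × L_s` -/
def pairMinus (r s : ℕ) (p q : X × F) : F :=
  (1/2 : ℝ) • (C.iota q.1 p.2 - ((-1:ℝ)^(r*s)) • C.iota p.1 q.2)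

/-- the multi-Courant bracket on sections of `L_r × L_s` -/
def courant (r s : ℕ) (p q : X × F) : X × F :=
  (C.sch p.1 q.1,
    ((-1:ℝ)^((r-1)*s)) • C.lie r p.1 q.2 + ((-1:ℝ)^s) • C.lie s q.1 p.2
      - ((-1:ℝ)^s) • C.d (C.pairPlus r s p q))

/-- the graded wedge product of sections of `L_r × L_s` -/
def wedgeP (r s : ℕ) (p q : X × F) : X × F :=
  (C.wedge p.1 q.1, C.pairPlus r s p q)

/-- `L_r = ⋀^r(TZ) ×_Z ⋀^{n+1-r}(T^*Z)` -/
def Lset (n r : ℕ) : Set (X × F) := {p | p.1 ∈ C.MV r ∧ p.2 ∈ C.Fm (n + 1 - r)}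

/-- the `s`-orthogonal complement of `V ⊆ L_r` with respect to `⟨⟨·,·⟩⟩₋` -/
def orthC (n r : ℕ) (V : Set (X × F)) (s : ℕ) : Set (X × F) :=
  {q ∈ C.Lset n s | ∀ p ∈ V, C.pairMinus r s p q = 0}

/-- a multi-Dirac structure of degree `n`: subbundles `D r ⊆ L_r` that are
maximally isotropic, i.e. `(D r)^{⊥,s} = D s` whenever `r + s ≤ n + 1` -/
structure IsMultiDirac (n : ℕ) (D : ℕ → Set (X × F)) : Prop where
  subset : ∀ r, 1 ≤ r → r ≤ n → D r ⊆ C.Lset n r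
  orth : ∀ r s, 1 ≤ r → 1 ≤ s → r + s ≤ n + 1 → C.orthC n r (D r) s = D s

/-- integrability: sections of `D` are closed under the multi-Courant bracket -/
def Integrable (n : ℕ) (D : ℕ → Set (X × F)) : Prop :=
  ∀ r s, 1 ≤ r → 1 ≤ s → r + s ≤ n + 1 →
    ∀ p ∈ D r, ∀ q ∈ D s, C.courant r s p q ∈ D (r + s - 1)

/-- the integrability tensor `T_D = 2 ⟨⟨·, [[·,·]]⟩⟩₋` -/
def TD (r s t : ℕ) (p q w : X × F) : F :=
  (2:ℝ) • C.pairMinus r (s + t - 1) p (C.courant s t q w)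

/-- the Jacobiator of the multi-Courant bracket -/
def jacobiator (r s t : ℕ) (p q w : X × F) : X × F :=
  C.courant r (s + t - 1) p (C.courant s t q w)
    + ((-1:ℝ)^((t-1)*(r+s))) • C.courant t (r + s - 1) w (C.courant r s p q)
    + ((-1:ℝ)^((r-1)*(s+t))) • C.courant s (t + r - 1) q (C.courant t r w p)

/-- the gauge transformation `Φ_σ (Γ, Σ) = (Γ, Σ + i_Γ σ)` -/
def gauge (σ : F) (p : X × F) : X × F := (p.1, p.2 + C.iota p.1 σ)

/-- the graph `{(Γ, i_Γ Ω)}` of a differential form `Ω` -/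
def graphD (Ω : F) (r : ℕ) : Set (X × F) := {p | p.1 ∈ C.MV r ∧ p.2 = C.iota p.1 Ω}

/-- the multi-Poisson bracket `{Σ, Σ'} = −(-1)^{|Σ|} i_{Γ_{Σ'}} dΣ`, written as a
function of the degree `k = |Σ|`, the form `Σ`, and a multivector field
`Γ_{Σ'}` associated with `Σ'` -/
def pb (k : ℕ) (α : F) (g : X) : F := -(((-1:ℝ)^k) • C.iota g (C.d α))

/-- an `(n-r)`-form `Σ` is admissible if `(Γ_Σ, dΣ) ∈ D_r` for some
`r`-multivector field `Γ_Σ` -/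
def Admissible (n : ℕ) (D : ℕ → Set (X × F)) (r : ℕ) (α : F) : Prop :=
  α ∈ C.Fm (n - r) ∧ ∃ g ∈ C.MV r, (g, C.d α) ∈ D r

/-- the form `Ω_D(v_1, …, v_n) := α_n(v_1, …, v_{n-1})` associated with `D_1`,
for sections `(v_i, α_i)` of `D_1` and `n = m + 1` -/
def OmD (m : ℕ) (p : Fin (m+1) → X × F) : F :=
  (List.ofFn fun i : Fin m => (p i.castSucc).1).foldl
    (fun β v => C.iota v β) (p (Fin.last m)).2

variable {A X F : Type} [CommRing A] [Algebra ℝ A]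
  [AddCommGroup X] [AddCommGroup F] [Module ℝ X] [Module ℝ F]
  [Module A X] [Module A F] [IsScalarTower ℝ A X] [IsScalarTower ℝ A F]
  (C : MultiCalc A X F)

lemma iota_rsmul (c : ℝ) (a : X) (α : F) :
    C.iota a (c • α) = c • C.iota a α := by
  rw [← algebraMap_smul A c α, C.iota_smul_right, algebraMap_smul]

lemma iota_zero (a : X) : C.iota a 0 = 0 := by
  have h := C.iota_rsmul (0 : ℝ) a 0
  simpa using h

lemma d_zero : C.d 0 = 0 := by
  have h := C.d_smul (0 : ℝ) 0
  simpa using h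

end MultiCalc

/-- For a closed `(n+1)`-form `σ`, the gauge transformation
`Φ_σ(Γ,Σ) = (Γ, Σ + i_Γ σ)` is an automorphism of the multi-Courant bracket. -/
theorem gauge_courant_automorphism {A X F : Type} [CommRing A] [Algebra ℝ A]
    [AddCommGroup X] [AddCommGroup F] [Module ℝ X] [Module ℝ F]
    [Module A X] [Module A F] [IsScalarTower ℝ A X] [IsScalarTower ℝ A F]
    (C : MultiCalc A X F)
    (n r s : ℕ) (hr : 1 ≤ r) (hs : 1 ≤ s) (hrs : r + s ≤ n + 1)
    (σ : F) (hσ : σ ∈ C.Fm (n + 1)) (hdσ : C.d σ = 0)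
    (p q : X × F) (hp : p ∈ C.Lset n r) (hq : q ∈ C.Lset n s) :
    C.gauge σ (C.courant r s p q) = C.courant r s (C.gauge σ p) (C.gauge σ q) := by
  obtain ⟨hΓ, hS1⟩ := hp
  obtain ⟨hΓ', hS2⟩ := hq
  have hxy : ((-1:ℝ))^(r*s) = (-1:ℝ)^((r-1)*s) * (-1:ℝ)^s := by
    rw [← pow_add]
    congr 1
    have : (r-1)*s = r*s - s := by
      cases r with
      | zero => omega
      | succ m => simp [Nat.succ_sub_one, Nat.succ_mul]
    rw [this, Nat.sub_add_cancel (Nat.le_mul_of_pos_left s hr)]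
  unfold MultiCalc.gauge MultiCalc.courant MultiCalc.lie MultiCalc.pairPlus
  refine Prod.ext rfl ?_
  simp only
  rw [C.koszul hΓ hΓ' σ, hdσ, C.iota_zero, smul_zero, sub_zero]
  simp only [C.iota_add_right, C.d_add, C.iota_rsmul, C.d_smul, smul_add,
    C.iota_comm hΓ hΓ' σ, hxy]
  match_scalars <;>
    first
      | ring1
      | (ring_nf; simp only [pow_mul', neg_one_sq, one_pow]; try norm_num)
end
end

section
/- For any (n+1)-form σ on Z (not necessarily closed), the map Φ_σ(Γ,Σ) = (Γ, Σ + i_Γ σ) is an automorphism of the graded wedge product: Φ_σ((Γ,Σ) ∧ (Γ',Σ')) = Φ_σ(Γ,Σ) ∧ Φ_σ(Γ',Σ'). -/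
noncomputable section

/-- For any `(n+1)`-form `σ` (not necessarily closed), the gauge
transformation `Φ_σ(Γ,Σ) = (Γ, Σ + i_Γ σ)` is an automorphism of the graded
wedge product. -/
theorem gauge_wedge_automorphism {A X F : Type} [CommRing A] [Algebra ℝ A]
    [AddCommGroup X] [AddCommGroup F] [Module ℝ X] [Module ℝ F]
    [Module A X] [Module A F] [IsScalarTower ℝ A X] [IsScalarTower ℝ A F]
    (C : MultiCalc A X F)
    (n r s : ℕ) (hr : 1 ≤ r) (hs : 1 ≤ s) (hrs : r + s ≤ n)
    (σ : F) (hσ : σ ∈ C.Fm (n + 1))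
    (p q : X × F) (hp : p ∈ C.Lset n r) (hq : q ∈ C.Lset n s) :
    C.gauge σ (C.wedgeP r s p q) = C.wedgeP r s (C.gauge σ p) (C.gauge σ q) := by
  obtain ⟨hp1, hp2⟩ := hp
  obtain ⟨hq1, hq2⟩ := hq
  have hw := C.iota_wedge hp1 hq1 σ
  have hc := C.iota_comm hp1 hq1 σ
  have h1 : ((-1:ℝ)^(r*s)) * ((-1:ℝ)^(r*s)) = 1 := by
    rw [← pow_add, ← two_mul, pow_mul, neg_one_sq, one_pow]
  simp only [MultiCalc.gauge, MultiCalc.wedgeP, MultiCalc.pairPlus, Prod.mk.injEq,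
    C.iota_add_right, hw, hc, smul_smul, h1]
  refine ⟨trivial, ?_⟩
  match_scalars <;> (ring_nf; try norm_num [pow_mul'])
end
end

section
/- If D = D_1 ⊕ ⋯ ⊕ D_n is a multi-Dirac structure of degree n on Z, then the wedge product of two sections of D is again a section of D: for (Γ,Σ) ∈ D_r and (Γ',Σ') ∈ D_s, (Γ,Σ) ∧ (Γ',Σ') = (Γ ∧ Γ', i_{Γ'}Σ) ∈ D_{r+s}. -/
noncomputable section

private lemma half_smul_cancel {F : Type} [AddCommGroup F] [Module ℝ F] {z : F}
    (h : (1/2:ℝ) • z = 0) : z = 0 := by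
  rcases smul_eq_zero.mp h with h' | h'
  · norm_num at h'
  · exact h'

private lemma iota_real_smul {A X F : Type} [CommRing A] [Algebra ℝ A]
    [AddCommGroup X] [AddCommGroup F] [Module ℝ X] [Module ℝ F]
    [Module A X] [Module A F] [IsScalarTower ℝ A X] [IsScalarTower ℝ A F]
    (C : MultiCalc A X F) (c : ℝ) (a : X) (α : F) :
    C.iota a (c • α) = c • C.iota a α := by
  rw [← algebraMap_smul A c α, C.iota_smul_right, algebraMap_smul]

private lemma neg_one_pow_smul_cancel {F : Type} [AddCommGroup F] [Module ℝ F]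
    (m : ℕ) (x : F) : ((-1:ℝ)^m) • (((-1:ℝ)^m) • x) = x := by
  rw [smul_smul, ← pow_add, Even.neg_one_pow ⟨m, by ring⟩, one_smul]

/-- The wedge product of two sections of a multi-Dirac structure is again a
section: for `(Γ,Σ) ∈ D_r` and `(Γ',Σ') ∈ D_s`,
`(Γ,Σ) ∧ (Γ',Σ') = (Γ ∧ Γ', i_{Γ'}Σ) ∈ D_{r+s}`. -/
theorem wedge_mem_multiDirac {A X F : Type} [CommRing A] [Algebra ℝ A]
    [AddCommGroup X] [AddCommGroup F] [Module ℝ X] [Module ℝ F]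
    [Module A X] [Module A F] [IsScalarTower ℝ A X] [IsScalarTower ℝ A F]
    (C : MultiCalc A X F)
    (n : ℕ) (D : ℕ → Set (X × F)) (hD : C.IsMultiDirac n D)
    (r s : ℕ) (hr : 1 ≤ r) (hs : 1 ≤ s) (hrs : r + s ≤ n)
    (p q : X × F) (hp : p ∈ D r) (hq : q ∈ D s) :
    C.wedgeP r s p q = (C.wedge p.1 q.1, C.iota q.1 p.2) ∧
      C.wedgeP r s p q ∈ D (r + s) := by
  obtain ⟨hp1, hp2⟩ := hD.subset r hr (by omega) hp
  obtain ⟨hq1, hq2⟩ := hD.subset s hs (by omega) hq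
  -- isotropy of p, q
  have hqorth : q ∈ C.orthC n r (D r) s := by
    rw [hD.orth r s hr hs (by omega)]; exact hq
  have hpq0 : C.pairMinus r s p q = 0 := hqorth.2 p hp
  have hpq : C.iota q.1 p.2 = ((-1:ℝ)^(r*s)) • C.iota p.1 q.2 := by
    have := half_smul_cancel hpq0
    exact sub_eq_zero.mp this
  have part1 : C.wedgeP r s p q = (C.wedge p.1 q.1, C.iota q.1 p.2) := by
    unfold MultiCalc.wedgeP MultiCalc.pairPlus
    rw [← hpq, ← two_smul ℝ, smul_smul]
    norm_num
  refine ⟨part1, ?_⟩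
  set t : ℕ := n + 1 - (r + s) with ht
  have ht1 : 1 ≤ t := by omega
  have hnt : n + 1 - t = r + s := by omega
  rw [← hD.orth t (r + s) ht1 (by omega) (by omega), part1]
  constructor
  · refine ⟨C.wedge_mem hp1 hq1, ?_⟩
    have h := C.iota_mem hq1 hp2
    have : n + 1 - r - s = n + 1 - (r + s) := by omega
    rwa [this] at h
  · intro w hw
    obtain ⟨hw1, hw2⟩ := hD.subset t ht1 (by omega) hw
    -- isotropy of p against w
    have hworth : w ∈ C.orthC n r (D r) t := by
      rw [hD.orth r t hr ht1 (by omega)]; exact hw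
    have hpw0 : C.pairMinus r t p w = 0 := hworth.2 p hp
    have rel1 : C.iota w.1 p.2 = ((-1:ℝ)^(r*t)) • C.iota p.1 w.2 :=
      sub_eq_zero.mp (half_smul_cancel hpw0)
    show (1/2:ℝ) • (C.iota (C.wedge p.1 q.1) w.2
        - ((-1:ℝ)^(t*(r+s))) • C.iota w.1 (C.iota q.1 p.2)) = 0
    have h1 : C.iota (C.wedge p.1 q.1) w.2 = C.iota q.1 (C.iota p.1 w.2) :=
      C.iota_wedge hp1 hq1 w.2
    have h2 : C.iota q.1 (C.iota w.1 p.2)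
        = ((-1:ℝ)^(s*t)) • C.iota w.1 (C.iota q.1 p.2) := C.iota_comm hq1 hw1 p.2
    have h3 : C.iota q.1 (C.iota w.1 p.2)
        = ((-1:ℝ)^(r*t)) • C.iota q.1 (C.iota p.1 w.2) := by
      rw [rel1, iota_real_smul]
    have h4 : C.iota w.1 (C.iota q.1 p.2)
        = ((-1:ℝ)^(s*t)) • (((-1:ℝ)^(r*t)) • C.iota q.1 (C.iota p.1 w.2)) := by
      rw [← h3, h2, neg_one_pow_smul_cancel]
    rw [h1, h4, smul_smul, smul_smul, ← pow_add, ← pow_add,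
      Even.neg_one_pow (by exact ⟨t*(r+s), by ring⟩ : Even (t*(r+s) + s*t + r*t)),
      one_smul, sub_self, smul_zero]
end
end

section
/- For an integrable multi-Dirac structure D, the multi-Poisson bracket {Σ,Σ'} := −(-1)^{|Σ|} i_{Γ_{Σ'}} dΣ of admissible forms is well-defined: it is independent of the choice of multivector field Γ_{Σ'} with (Γ_{Σ'}, dΣ') ∈ D. -/
noncomputable section

/-- The multi-Poisson bracket `{Σ,Σ'} = −(-1)^{|Σ|} i_{Γ_{Σ'}} dΣ` of
admissible forms is well defined: it does not depend on the choice of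
multivector field `Γ_{Σ'}` with `(Γ_{Σ'}, dΣ') ∈ D`. -/
theorem pb_well_defined {A X F : Type} [CommRing A] [Algebra ℝ A]
    [AddCommGroup X] [AddCommGroup F] [Module ℝ X] [Module ℝ F]
    [Module A X] [Module A F] [IsScalarTower ℝ A X] [IsScalarTower ℝ A F]
    (C : MultiCalc A X F)
    (n : ℕ) (D : ℕ → Set (X × F)) (hD : C.IsMultiDirac n D)
    (hInt : C.Integrable n D)
    (r s : ℕ) (hr : 1 ≤ r) (hs : 1 ≤ s) (hrs : r + s ≤ n + 1)
    (α : F) (hα : α ∈ C.Fm (n - r)) (g : X) (hg : g ∈ C.MV r)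
    (hgD : (g, C.d α) ∈ D r)
    (β : F) (hβ : β ∈ C.Fm (n - s)) (g1 g2 : X)
    (hg1 : g1 ∈ C.MV s) (hg2 : g2 ∈ C.MV s)
    (h1 : (g1, C.d β) ∈ D s) (h2 : (g2, C.d β) ∈ D s) :
    C.pb (r - 1) α g1 = C.pb (r - 1) α g2 := by
  have horth : C.orthC n s (D s) r = D r := hD.orth s r hs hr (by omega)
  rw [← horth] at hgD
  obtain ⟨-, hperp⟩ := hgD
  have h12 : (1/2 : ℝ) ≠ 0 := by norm_num
  have hc : ((-1:ℝ)^(s*r)) ≠ 0 := by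
    simpa using pow_ne_zero (s*r) (by norm_num : (-1:ℝ) ≠ 0)
  have e1 : C.iota g (C.d β) - ((-1:ℝ)^(s*r)) • C.iota g1 (C.d α) = 0 :=
    (smul_eq_zero.mp (hperp _ h1)).resolve_left h12
  have e2 : C.iota g (C.d β) - ((-1:ℝ)^(s*r)) • C.iota g2 (C.d α) = 0 :=
    (smul_eq_zero.mp (hperp _ h2)).resolve_left h12
  have hsmul : ((-1:ℝ)^(s*r)) • C.iota g1 (C.d α)
      = ((-1:ℝ)^(s*r)) • C.iota g2 (C.d α) := by
    have := sub_eq_zero.mp e1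
    have := sub_eq_zero.mp e2
    rw [← sub_eq_zero.mp e1, ← sub_eq_zero.mp e2]
  have key : C.iota g1 (C.d α) = C.iota g2 (C.d α) := by
    have := congrArg (fun x => ((-1:ℝ)^(s*r))⁻¹ • x) hsmul
    simpa [inv_smul_smul₀ hc] using this
  unfold MultiCalc.pb
  rw [key]
end
end

section
/- The multi-Poisson bracket on admissible forms of an integrable multi-Dirac structure is graded anti-commutative: {Σ,Σ'} = −(-1)^{kl}{Σ',Σ} where k = |Σ|, l = |Σ'|. -/
noncomputable section

/-- The multi-Poisson bracket on admissible forms is graded anticommutative: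
`{Σ,Σ'} = −(-1)^{kl} {Σ',Σ}` with `k = |Σ|`, `l = |Σ'|`. -/
theorem pb_antisymmetric {A X F : Type} [CommRing A] [Algebra ℝ A]
    [AddCommGroup X] [AddCommGroup F] [Module ℝ X] [Module ℝ F]
    [Module A X] [Module A F] [IsScalarTower ℝ A X] [IsScalarTower ℝ A F]
    (C : MultiCalc A X F)
    (n : ℕ) (D : ℕ → Set (X × F)) (hD : C.IsMultiDirac n D)
    (hInt : C.Integrable n D)
    (r s : ℕ) (hr : 1 ≤ r) (hs : 1 ≤ s) (hrs : r + s ≤ n + 1)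
    (α : F) (hα : α ∈ C.Fm (n - r)) (g : X) (hg : g ∈ C.MV r)
    (hgD : (g, C.d α) ∈ D r)
    (β : F) (hβ : β ∈ C.Fm (n - s)) (g' : X) (hg' : g' ∈ C.MV s)
    (hg'D : (g', C.d β) ∈ D s) :
    C.pb (r - 1) α g' = -(((-1:ℝ)^((r-1)*(s-1))) • C.pb (s - 1) β g) := by
  -- isotropy: (g', dβ) lies in the orthogonal complement of D r
  have horth : (g', C.d β) ∈ C.orthC n r (D r) s := by
    rw [hD.orth r s hr hs hrs]; exact hg'D
  have h0 : C.pairMinus r s (g, C.d α) (g', C.d β) = 0 := horth.2 _ hgD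
  have key : C.iota g' (C.d α) = ((-1:ℝ)^(r*s)) • C.iota g (C.d β) := by
    unfold MultiCalc.pairMinus at h0
    rcases smul_eq_zero.mp h0 with h | h
    · norm_num at h
    · exact sub_eq_zero.mp h
  obtain ⟨r', rfl⟩ : ∃ r', r = r' + 1 := ⟨r - 1, (Nat.succ_pred_eq_of_pos hr).symm⟩
  obtain ⟨s', rfl⟩ : ∃ s', s = s' + 1 := ⟨s - 1, (Nat.succ_pred_eq_of_pos hs).symm⟩
  simp only [Nat.add_sub_cancel] at *
  unfold MultiCalc.pb
  rw [key, smul_smul, smul_neg, neg_neg, smul_smul]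
  congr 1
  have hsq : ∀ m : ℕ, ((-1:ℝ))^m * ((-1:ℝ))^m = 1 := by
    intro m
    rw [← pow_add, ← two_mul, pow_mul]
    norm_num
  rw [show (r' + 1) * (s' + 1) = (r' * s' + s') + (r' + 1) from by ring, pow_add,
    show r' * s' + s' = r' * s' + s' from rfl]
  rw [← mul_assoc, pow_add, pow_add]
  ring_nf
  rw [mul_comm r' 2, pow_mul, neg_one_sq, one_pow, one_mul, neg_smul, neg_neg]
end
end

section
/- The integrability expression T_D((Γ,Σ),(Γ',Σ'),(Γ'',Σ'')) := 2⟨⟨(Γ,Σ), [[(Γ',Σ'),(Γ'',Σ'')]]⟩⟩_- restricted to a multi-Dirac structure D is C^∞(Z)-linear (tensorial) in each of its three arguments; in particular it is graded antisymmetric under exchange of arguments up to signs determined by the degrees, e.g. T_D((Γ,Σ),(Γ'',Σ''),(Γ',Σ')) = −(-1)^{(s-1)(t-1)} T_D((Γ,Σ),(Γ',Σ'),(Γ'',Σ'')). -/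
noncomputable section

namespace MultiCalc
section Aux
variable {A X F : Type} [CommRing A] [Algebra ℝ A]
  [AddCommGroup X] [AddCommGroup F] [Module ℝ X] [Module ℝ F]
  [Module A X] [Module A F] [IsScalarTower ℝ A X] [IsScalarTower ℝ A F]
variable (C : MultiCalc A X F)

theorem iotaR_right (x : ℝ) (a : X) (α : F) : C.iota a (x • α) = x • C.iota a α := by
  rw [← algebraMap_smul A x α, C.iota_smul_right, algebraMap_smul]

theorem iotaR_left (x : ℝ) (a : X) (α : F) : C.iota (x • a) α = x • C.iota a α := by
  rw [← algebraMap_smul A x a, C.iota_smul_left, algebraMap_smul]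

theorem iota_neg_right (a : X) (α : F) : C.iota a (-α) = -C.iota a α := by
  rw [← neg_one_smul ℝ α, C.iotaR_right, neg_one_smul]

theorem iota_sub_right (a : X) (α β : F) : C.iota a (α - β) = C.iota a α - C.iota a β := by
  rw [sub_eq_add_neg, C.iota_add_right, C.iota_neg_right, ← sub_eq_add_neg]

theorem d_neg (α : F) : C.d (-α) = -C.d α := by
  rw [← neg_one_smul ℝ α, C.d_smul, neg_one_smul]

theorem d_sub (α β : F) : C.d (α - β) = C.d α - C.d β := by
  rw [sub_eq_add_neg, C.d_add, C.d_neg, ← sub_eq_add_neg]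

theorem sign_cancel (e : ℕ) {x y : F} (h : ((-1:ℝ)^e) • x = ((-1:ℝ)^e) • y) : x = y := by
  have h2 := congrArg (fun z : F => ((-1:ℝ)^e) • z) h
  simp only [smul_smul, ← pow_add] at h2
  rwa [Even.neg_one_pow ⟨e, rfl⟩, one_smul, one_smul] at h2

theorem iso {n : ℕ} {D : ℕ → Set (X × F)} (hD : C.IsMultiDirac n D) {r s : ℕ}
    (hr : 1 ≤ r) (hs : 1 ≤ s) (hrs : r + s ≤ n + 1) {p q : X × F}
    (hp : p ∈ D r) (hq : q ∈ D s) :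
    C.iota q.1 p.2 = ((-1:ℝ)^(r*s)) • C.iota p.1 q.2 := by
  have hq' : q ∈ C.orthC n r (D r) s := by rw [hD.orth r s hr hs hrs]; exact hq
  have h0 : C.pairMinus r s p q = 0 := hq'.2 p hp
  have key : C.iota q.1 p.2 - ((-1:ℝ)^(r*s)) • C.iota p.1 q.2 = (2:ℝ) • C.pairMinus r s p q := by
    simp only [MultiCalc.pairMinus, smul_smul]
    norm_num
  have : C.iota q.1 p.2 - ((-1:ℝ)^(r*s)) • C.iota p.1 q.2 = 0 := by
    rw [key, h0, smul_zero]
  exact sub_eq_zero.mp this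

theorem smul_mem_D {n : ℕ} {D : ℕ → Set (X × F)} (hD : C.IsMultiDirac n D) {r s : ℕ}
    (hr : 1 ≤ r) (hs : 1 ≤ s) (hrs : r + s ≤ n + 1) (f : A) {q : X × F}
    (hq : q ∈ D s) : f • q ∈ D s := by
  rw [← hD.orth r s hr hs hrs] at hq ⊢
  obtain ⟨⟨hq1, hq2⟩, hq3⟩ := hq
  refine ⟨⟨?_, ?_⟩, ?_⟩
  · show (f • q).1 ∈ C.MV s
    rw [Prod.smul_fst]; exact Submodule.smul_mem _ f hq1
  · show (f • q).2 ∈ C.Fm (n + 1 - s)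
    rw [Prod.smul_snd]; exact Submodule.smul_mem _ f hq2
  · intro p hp
    have h0 := hq3 p hp
    have key : C.pairMinus r s p (f • q) = f • C.pairMinus r s p q := by
      simp only [MultiCalc.pairMinus, Prod.smul_fst, Prod.smul_snd,
        C.iota_smul_left, C.iota_smul_right]
      rw [smul_comm ((-1:ℝ)^(r*s)) f, ← smul_sub, smul_comm ((1/2):ℝ) f]
    rw [key, h0, smul_zero]

theorem TD_smul1 (r s t : ℕ) (f : A) (p q w : X × F) :
    C.TD r s t (f • p) q w = f • C.TD r s t p q w := by
  simp only [MultiCalc.TD, MultiCalc.pairMinus, Prod.smul_fst, Prod.smul_snd,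
    C.iota_smul_left, C.iota_smul_right]
  rw [smul_comm ((-1:ℝ)^(r*(s+t-1))) f, ← smul_sub, smul_comm ((1/2):ℝ) f,
    smul_comm (2:ℝ) f]

theorem TD_add1 (r s t : ℕ) (p p' q w : X × F) :
    C.TD r s t (p + p') q w = C.TD r s t p q w + C.TD r s t p' q w := by
  simp only [MultiCalc.TD, MultiCalc.pairMinus, Prod.fst_add, Prod.snd_add,
    C.iota_add_left, C.iota_add_right]
  module

theorem TD_add2 (r s t : ℕ) (p q q' w : X × F) :
    C.TD r s t p (q + q') w = C.TD r s t p q w + C.TD r s t p q' w := by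
  simp only [MultiCalc.TD, MultiCalc.pairMinus, MultiCalc.courant, MultiCalc.pairPlus,
    MultiCalc.lie, Prod.fst_add, Prod.snd_add, C.sch_add_left, C.sch_add_right,
    C.iota_add_left, C.iota_add_right, C.iota_sub_right, C.iotaR_right,
    C.d_add, C.d_sub, C.d_smul, smul_add, smul_sub]
  module

theorem TD_add3 (r s t : ℕ) (p q w w' : X × F) :
    C.TD r s t p q (w + w') = C.TD r s t p q w + C.TD r s t p q w' := by
  simp only [MultiCalc.TD, MultiCalc.pairMinus, MultiCalc.courant, MultiCalc.pairPlus,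
    MultiCalc.lie, Prod.fst_add, Prod.snd_add, C.sch_add_left, C.sch_add_right,
    C.iota_add_left, C.iota_add_right, C.iota_sub_right, C.iotaR_right,
    C.d_add, C.d_sub, C.d_smul, smul_add, smul_sub]
  module

set_option maxHeartbeats 2000000 in
theorem TD_NF (r s t : ℕ) (p q w : X × F)
    (ha : p.1 ∈ C.MV (r+1)) (hb : q.1 ∈ C.MV (s+1)) (hc : w.1 ∈ C.MV (t+1))
    (h1 : C.iota w.1 q.2 = ((-1:ℝ)^((s+1)*(t+1))) • C.iota q.1 w.2)
    (h2 : C.iota q.1 p.2 = ((-1:ℝ)^((r+1)*(s+1))) • C.iota p.1 q.2)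
    (h3 : C.iota w.1 p.2 = ((-1:ℝ)^((r+1)*(t+1))) • C.iota p.1 w.2) :
    C.TD (r+1) (s+1) (t+1) p q w =
      ((-1:ℝ)^(r*s+r*t+s*t+t)) • C.d (C.iota p.1 (C.iota q.1 w.2))
    + ((-1:ℝ)^(r+r*s+r*t+s*t+t)) • C.iota p.1 (C.d (C.iota q.1 w.2))
    + ((-1:ℝ)^(r+r*s+r*t+s+s*t+t)) • C.iota p.1 (C.iota q.1 (C.d w.2))
    - ((-1:ℝ)^(r+r*s+r*t+s+t)) • C.iota p.1 (C.iota w.1 (C.d q.2))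
    - ((-1:ℝ)^(r+r*t+s*t+t)) • C.iota q.1 (C.d (C.iota p.1 w.2))
    + ((-1:ℝ)^(s*t+t)) • C.iota q.1 (C.iota w.1 (C.d p.2))
    + ((-1:ℝ)^(r+r*s+s)) • C.iota w.1 (C.d (C.iota p.1 q.2)) := by
  have e1 : (s+1) + (t+1) - 1 = s + t + 1 := by omega
  have e2 : (s+1) - 1 = s := by omega
  simp only [MultiCalc.TD, MultiCalc.courant, MultiCalc.pairMinus, MultiCalc.pairPlus,
    MultiCalc.lie, e1]
  rw [C.koszul hb hc p.2]
  simp only [e2]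
  rw [h1, h2, h3]
  simp only [C.iotaR_right, C.iota_add_right, C.iota_sub_right, C.d_add, C.d_sub,
    C.d_smul, smul_add, smul_sub, smul_smul]
  rw [C.iota_comm hc hb (C.d p.2), C.iota_comm hb ha w.2]
  simp only [C.iotaR_right, C.d_smul, smul_add, smul_sub, smul_smul]
  match_scalars <;>
  · rcases Nat.even_or_odd r with ⟨r1,rfl⟩|⟨r1,rfl⟩ <;>
    rcases Nat.even_or_odd s with ⟨s1,rfl⟩|⟨s1,rfl⟩ <;>
    rcases Nat.even_or_odd t with ⟨t1,rfl⟩|⟨t1,rfl⟩ <;>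
    simp [Even.neg_one_pow, Odd.neg_one_pow, Nat.even_add, Nat.even_mul,
      Nat.even_add_one, parity_simps] <;>
    first
      | done
      | (norm_num
         done)
      | (repeat' (first
            | rw [Odd.neg_one_pow (by simp [Nat.odd_iff, Nat.add_mod, Nat.mul_mod,
                ← Nat.two_mul, Nat.mul_add_mod, Nat.mul_mod_right]; try omega)]
            | rw [Even.neg_one_pow (by simp [Nat.even_iff, Nat.add_mod, Nat.mul_mod,
                ← Nat.two_mul, Nat.mul_add_mod, Nat.mul_mod_right]; try omega)])
         try norm_num
         done)


set_option maxHeartbeats 2000000 in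
set_option linter.unreachableTactic false in
set_option linter.unusedTactic false in
theorem TD_cyc {n : ℕ} {D : ℕ → Set (X × F)} (hD : C.IsMultiDirac n D) {r s t : ℕ}
    (hrs : (r+1) + (s+1) ≤ n + 1) (hst : (s+1) + (t+1) ≤ n + 1) (hrt : (r+1) + (t+1) ≤ n + 1)
    {p q w : X × F} (hp : p ∈ D (r+1)) (hq : q ∈ D (s+1)) (hw : w ∈ D (t+1)) :
    C.TD (s+1) (t+1) (r+1) q w p = ((-1:ℝ)^(r+r*s+r*t+s)) • C.TD (r+1) (s+1) (t+1) p q w := by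
  have ha : p.1 ∈ C.MV (r+1) := (hD.subset (r+1) (by omega) (by omega) hp).1
  have hb : q.1 ∈ C.MV (s+1) := (hD.subset (s+1) (by omega) (by omega) hq).1
  have hc : w.1 ∈ C.MV (t+1) := (hD.subset (t+1) (by omega) (by omega) hw).1
  have h1 : C.iota w.1 q.2 = ((-1:ℝ)^((s+1)*(t+1))) • C.iota q.1 w.2 :=
    C.iso hD (by omega) (by omega) hst hq hw
  have h2 : C.iota q.1 p.2 = ((-1:ℝ)^((r+1)*(s+1))) • C.iota p.1 q.2 :=
    C.iso hD (by omega) (by omega) hrs hp hq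
  have h3 : C.iota w.1 p.2 = ((-1:ℝ)^((r+1)*(t+1))) • C.iota p.1 w.2 :=
    C.iso hD (by omega) (by omega) hrt hp hw
  have h1' : C.iota p.1 w.2 = ((-1:ℝ)^((t+1)*(r+1))) • C.iota w.1 p.2 :=
    C.iso hD (by omega) (by omega) (by omega) hw hp
  have h3' : C.iota p.1 q.2 = ((-1:ℝ)^((s+1)*(r+1))) • C.iota q.1 p.2 :=
    C.iso hD (by omega) (by omega) (by omega) hq hp
  rw [C.TD_NF s t r q w p hb hc ha h1' h1 h3', C.TD_NF r s t p q w ha hb hc h1 h2 h3]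
  rw [h2, h3]
  simp only [C.iotaR_right, C.d_smul, smul_add, smul_sub, smul_smul]
  rw [C.iota_comm hb ha w.2, C.iota_comm hb ha (C.d w.2), C.iota_comm hc ha (C.d q.2)]
  simp only [C.iotaR_right, C.d_smul, smul_add, smul_sub, smul_smul]
  match_scalars <;>
  · rcases Nat.even_or_odd r with ⟨r1,rfl⟩|⟨r1,rfl⟩ <;>
    rcases Nat.even_or_odd s with ⟨s1,rfl⟩|⟨s1,rfl⟩ <;>
    rcases Nat.even_or_odd t with ⟨t1,rfl⟩|⟨t1,rfl⟩ <;>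
    simp [Even.neg_one_pow, Odd.neg_one_pow, Nat.even_add, Nat.even_mul,
      Nat.even_add_one, parity_simps] <;>
    first
      | done
      | (norm_num
         done)
      | (repeat' (first
            | rw [Odd.neg_one_pow (by simp [Nat.odd_iff, Nat.add_mod, Nat.mul_mod,
                ← Nat.two_mul, Nat.mul_add_mod, Nat.mul_mod_right]; try omega)]
            | rw [Even.neg_one_pow (by simp [Nat.even_iff, Nat.add_mod, Nat.mul_mod,
                ← Nat.two_mul, Nat.mul_add_mod, Nat.mul_mod_right]; try omega)])
         try norm_num
         done)

set_option maxHeartbeats 2000000 in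
set_option linter.unreachableTactic false in
set_option linter.unusedTactic false in
theorem TD_anti {n : ℕ} {D : ℕ → Set (X × F)} (hD : C.IsMultiDirac n D) {r s t : ℕ}
    (hrs : (r+1) + (s+1) ≤ n + 1) (hst : (s+1) + (t+1) ≤ n + 1) (hrt : (r+1) + (t+1) ≤ n + 1)
    {p q w : X × F} (hp : p ∈ D (r+1)) (hq : q ∈ D (s+1)) (hw : w ∈ D (t+1)) :
    C.TD (r+1) (t+1) (s+1) p w q = -(((-1:ℝ)^(s*t)) • C.TD (r+1) (s+1) (t+1) p q w) := by
  have ha : p.1 ∈ C.MV (r+1) := (hD.subset (r+1) (by omega) (by omega) hp).1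
  have hb : q.1 ∈ C.MV (s+1) := (hD.subset (s+1) (by omega) (by omega) hq).1
  have hc : w.1 ∈ C.MV (t+1) := (hD.subset (t+1) (by omega) (by omega) hw).1
  have h1 : C.iota w.1 q.2 = ((-1:ℝ)^((s+1)*(t+1))) • C.iota q.1 w.2 :=
    C.iso hD (by omega) (by omega) hst hq hw
  have h2 : C.iota q.1 p.2 = ((-1:ℝ)^((r+1)*(s+1))) • C.iota p.1 q.2 :=
    C.iso hD (by omega) (by omega) hrs hp hq
  have h3 : C.iota w.1 p.2 = ((-1:ℝ)^((r+1)*(t+1))) • C.iota p.1 w.2 :=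
    C.iso hD (by omega) (by omega) hrt hp hw
  have h1'' : C.iota q.1 w.2 = ((-1:ℝ)^((t+1)*(s+1))) • C.iota w.1 q.2 :=
    C.iso hD (by omega) (by omega) (by omega) hw hq
  rw [C.TD_NF r t s p w q ha hc hb h1'' h3 h2, C.TD_NF r s t p q w ha hb hc h1 h2 h3]
  rw [h1]
  simp only [C.iotaR_right, C.d_smul, smul_add, smul_sub, smul_smul]
  rw [C.iota_comm hc hb (C.d p.2)]
  simp only [C.iotaR_right, C.d_smul, smul_add, smul_sub, smul_smul, smul_neg, neg_add,
    neg_sub, neg_neg]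
  match_scalars <;>
  · rcases Nat.even_or_odd r with ⟨r1,rfl⟩|⟨r1,rfl⟩ <;>
    rcases Nat.even_or_odd s with ⟨s1,rfl⟩|⟨s1,rfl⟩ <;>
    rcases Nat.even_or_odd t with ⟨t1,rfl⟩|⟨t1,rfl⟩ <;>
    simp [Even.neg_one_pow, Odd.neg_one_pow, Nat.even_add, Nat.even_mul,
      Nat.even_add_one, parity_simps] <;>
    first
      | done
      | (norm_num
         done)
      | (repeat' (first
            | rw [Odd.neg_one_pow (by simp [Nat.odd_iff, Nat.add_mod, Nat.mul_mod,
                ← Nat.two_mul, Nat.mul_add_mod, Nat.mul_mod_right]; try omega)]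
            | rw [Even.neg_one_pow (by simp [Nat.even_iff, Nat.add_mod, Nat.mul_mod,
                ← Nat.two_mul, Nat.mul_add_mod, Nat.mul_mod_right]; try omega)])
         try norm_num
         done)

theorem TD_smul2 {n : ℕ} {D : ℕ → Set (X × F)} (hD : C.IsMultiDirac n D) {r s t : ℕ}
    (hrs : (r+1) + (s+1) ≤ n + 1) (hst : (s+1) + (t+1) ≤ n + 1) (hrt : (r+1) + (t+1) ≤ n + 1)
    (f : A) {p q w : X × F} (hp : p ∈ D (r+1)) (hq : q ∈ D (s+1)) (hw : w ∈ D (t+1)) :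
    C.TD (r+1) (s+1) (t+1) p (f • q) w = f • C.TD (r+1) (s+1) (t+1) p q w := by
  have hfq : f • q ∈ D (s+1) := C.smul_mem_D hD (r := r+1) (by omega) (by omega) hrs f hq
  have c1 := C.TD_cyc hD hrs hst hrt hp hq hw
  have c2 := C.TD_cyc hD hrs hst hrt hp hfq hw
  have l1 := C.TD_smul1 (s+1) (t+1) (r+1) f q w p
  refine MultiCalc.sign_cancel (r+r*s+r*t+s) ?_
  rw [← c2, l1, c1]
  exact smul_comm f _ _

end Aux
end MultiCalc


/-- The integrability expression `T_D` restricted to a multi-Dirac structure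
is `C^∞(Z)`-linear (tensorial) in each argument, and graded antisymmetric
under exchange of its arguments. -/
theorem TD_tensorial {A X F : Type} [CommRing A] [Algebra ℝ A]
    [AddCommGroup X] [AddCommGroup F] [Module ℝ X] [Module ℝ F]
    [Module A X] [Module A F] [IsScalarTower ℝ A X] [IsScalarTower ℝ A F]
    (C : MultiCalc A X F)
    (n : ℕ) (D : ℕ → Set (X × F)) (hD : C.IsMultiDirac n D)
    (r s t : ℕ) (hr : 1 ≤ r) (hs : 1 ≤ s) (ht : 1 ≤ t)
    (hrs : r + s ≤ n + 1) (hst : s + t ≤ n + 1) (hrt : r + t ≤ n + 1)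
    (p q w : X × F) (hp : p ∈ D r) (hq : q ∈ D s) (hw : w ∈ D t) (f : A) :
    C.TD r s t (f • p) q w = f • C.TD r s t p q w ∧
      C.TD r s t p (f • q) w = f • C.TD r s t p q w ∧
      C.TD r s t p q (f • w) = f • C.TD r s t p q w ∧
      (∀ p' ∈ D r, C.TD r s t (p + p') q w = C.TD r s t p q w + C.TD r s t p' q w) ∧
      (∀ q' ∈ D s, C.TD r s t p (q + q') w = C.TD r s t p q w + C.TD r s t p q' w) ∧
      (∀ w' ∈ D t, C.TD r s t p q (w + w') = C.TD r s t p q w + C.TD r s t p q w') ∧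
      C.TD r t s p w q = -(((-1:ℝ)^((s-1)*(t-1))) • C.TD r s t p q w) := by
  obtain ⟨r1, rfl⟩ : ∃ k, r = k + 1 := ⟨r - 1, by omega⟩
  obtain ⟨s1, rfl⟩ : ∃ k, s = k + 1 := ⟨s - 1, by omega⟩
  obtain ⟨t1, rfl⟩ : ∃ k, t = k + 1 := ⟨t - 1, by omega⟩
  refine ⟨C.TD_smul1 _ _ _ f p q w, C.TD_smul2 hD hrs hst hrt f hp hq hw, ?_,
    fun p' _ => C.TD_add1 _ _ _ p p' q w, fun q' _ => C.TD_add2 _ _ _ p q q' w,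
    fun w' _ => C.TD_add3 _ _ _ p q w w', ?_⟩
  · have a1 := C.TD_anti hD hrs hst hrt hp hq hw
    have a2 := C.TD_anti hD hrs hst hrt hp hq
      (C.smul_mem_D hD (r := s1+1) (by omega) (by omega) hst f hw)
    have l2 : C.TD (r1+1) (t1+1) (s1+1) p (f • w) q
        = f • C.TD (r1+1) (t1+1) (s1+1) p w q :=
      C.TD_smul2 hD hrt (by omega) hrs f hp hw hq
    have key : -(((-1:ℝ)^(s1*t1)) • C.TD (r1+1) (s1+1) (t1+1) p q (f • w))
        = -(((-1:ℝ)^(s1*t1)) • (f • C.TD (r1+1) (s1+1) (t1+1) p q w)) := by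
      rw [← a2, l2, a1, smul_neg, smul_comm]
    exact MultiCalc.sign_cancel (s1*t1) (neg_injective key)
  · have a1 := C.TD_anti hD hrs hst hrt hp hq hw
    simpa [Nat.add_sub_cancel] using a1
end
end
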